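/- arXiv:2212.07710 — 2 statements merged into one kernel-verified Lean document; each statement's English description precedes it below -/
import Mathlib

section
/- The Jacobi–Anger expansion: for all real τ and θ, cos(τ cos θ) = J_0(τ) + 2 Σ_{m=1}^∞ (-1)^m J_{2m}(τ) cos(2mθ). -/
/-- Bessel function of the first kind of order `m`. -/
noncomputable def besselJ (m : ℕ) (τ : ℝ) : ℝ :=
  ∑' k : ℕ, (-1 : ℝ) ^ k / (Nat.factorial k * Nat.factorial (m + k)) * (τ / 2) ^ (2 * k + m)

open Finset in
lemma sum_range_add' {M : Type*} [AddCommMonoid M] (f : ℕ → M) (m n : ℕ) :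
    ∑ i ∈ range (m + n), f i = (∑ i ∈ range m, f i) + ∑ i ∈ range n, f (m + i) := by
  induction n with
  | zero => simp
  | succ n ih => rw [← add_assoc, sum_range_succ, ih, sum_range_succ, add_assoc]

open Complex Finset in
lemma cos_pow_expandC (k : ℕ) (z : ℂ) :
    (2 * Complex.cos z) ^ (2 * k) =
      (Nat.choose (2 * k) k : ℂ) +
        ∑ m ∈ range k, 2 * (Nat.choose (2 * k) (k - (m + 1)) : ℂ) * Complex.cos (2 * (m + 1) * z) := by
  set a := Complex.exp (z * I) with ha
  set b := Complex.exp (-z * I) with hb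
  have hab : a * b = 1 := by rw [ha, hb, ← Complex.exp_add]; ring_nf; exact Complex.exp_zero
  have h1 : (2 * Complex.cos z) ^ (2 * k)
      = ∑ j ∈ range (2 * k + 1), a ^ j * b ^ (2 * k - j) * (Nat.choose (2 * k) j : ℂ) := by
    rw [Complex.two_cos, add_pow]
  have h2 : 2 * k + 1 = k + (k + 1) := by omega
  rw [h1, h2, sum_range_add' (fun j => a ^ j * b ^ (2 * k - j) * (Nat.choose (2 * k) j : ℂ)) k (k+1),
    Finset.sum_range_succ' (fun i => a ^ (k + i) * b ^ (2 * k - (k + i)) * (Nat.choose (2*k) (k + i) : ℂ)) k]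
  have hmid : a ^ (k + 0) * b ^ (2 * k - (k + 0)) * (Nat.choose (2*k) (k+0) : ℂ) = (Nat.choose (2*k) k : ℂ) := by
    have : 2 * k - (k + 0) = k := by omega
    rw [this]
    simp only [Nat.add_zero]
    rw [← mul_pow, hab, one_pow, one_mul]
  rw [← Finset.sum_range_reflect (fun j => a ^ j * b ^ (2 * k - j) * (Nat.choose (2 * k) j : ℂ)) k]
  rw [hmid]
  have key : (∑ j ∈ range k, a ^ (k - 1 - j) * b ^ (2 * k - (k - 1 - j)) * ((2 * k).choose (k - 1 - j) : ℂ))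
      + (∑ i ∈ range k, a ^ (k + (i + 1)) * b ^ (2 * k - (k + (i + 1))) * ((2 * k).choose (k + (i + 1)) : ℂ))
      = ∑ m ∈ range k, 2 * ((2 * k).choose (k - (m + 1)) : ℂ) * Complex.cos (2 * (m + 1) * z) := by
    rw [← Finset.sum_add_distrib]
    apply Finset.sum_congr rfl
    intro i hi
    have hik : i < k := Finset.mem_range.mp hi
    -- first term: j = k - 1 - i = k - (i+1)
    have e1 : k - 1 - i = k - (i + 1) := by omega
    have e2 : 2 * k - (k - (i + 1)) = (k - (i+1)) + (2 * (i + 1)) := by omega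
    have e3 : 2 * k - (k + (i + 1)) = k - (i + 1) := by omega
    have e4 : k + (i + 1) = (k - (i + 1)) + 2 * (i + 1) := by omega
    have hchoose : (Nat.choose (2 * k) (k + (i + 1)) : ℂ) = (Nat.choose (2 * k) (k - (i + 1)) : ℂ) := by
      have h := Nat.choose_symm (show k + (i + 1) ≤ 2 * k by omega)
      have : 2 * k - (k + (i + 1)) = k - (i + 1) := by omega
      rw [this] at h
      exact_mod_cast congrArg (Nat.cast (R := ℂ)) h.symm
    rw [e1, e2, e3, hchoose, e4]
    have habp : a ^ (k - (i+1)) * b ^ (k - (i+1)) = 1 := by rw [← mul_pow, hab, one_pow]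
    have hcos : a ^ (2 * (i + 1)) + b ^ (2 * (i + 1)) = 2 * Complex.cos (2 * (i + 1) * z) := by
      rw [ha, hb, ← Complex.exp_nat_mul, ← Complex.exp_nat_mul, Complex.two_cos]
      push_cast
      ring_nf
    calc a ^ (k - (i+1)) * b ^ ((k - (i+1)) + 2 * (i+1)) * (Nat.choose (2*k) (k - (i+1)) : ℂ)
          + a ^ ((k - (i+1)) + 2 * (i+1)) * b ^ (k - (i+1)) * (Nat.choose (2*k) (k - (i+1)) : ℂ)
        = (a ^ (k - (i+1)) * b ^ (k - (i+1))) * (a ^ (2*(i+1)) + b ^ (2*(i+1))) * (Nat.choose (2*k) (k - (i+1)) : ℂ) := by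
          rw [pow_add, pow_add]; ring
      _ = 2 * (Nat.choose (2*k) (k - (i+1)) : ℂ) * Complex.cos (2 * (i + 1) * z) := by
          rw [habp, hcos]; ring
  
  linear_combination key

lemma cos_pow_expand (k : ℕ) (x : ℝ) :
    (2 * Real.cos x) ^ (2 * k) =
      (Nat.choose (2 * k) k : ℝ) +
        ∑ m ∈ Finset.range k, 2 * (Nat.choose (2 * k) (k - (m + 1)) : ℝ) * Real.cos (2 * (m + 1) * x) := by
  have h := cos_pow_expandC k (x : ℂ)
  have h2 : ((2 * Real.cos x) ^ (2 * k) : ℂ) =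
      ((Nat.choose (2 * k) k : ℝ) +
        ∑ m ∈ Finset.range k, 2 * (Nat.choose (2 * k) (k - (m + 1)) : ℝ) * Real.cos (2 * (m + 1) * x) : ℝ) := by
    push_cast [Complex.ofReal_cos]
    push_cast at h
    convert h using 2
  exact_mod_cast h2

lemma weight_sum (k : ℕ) :
    (Nat.choose (2 * k) k : ℝ) + ∑ m ∈ Finset.range k, 2 * (Nat.choose (2 * k) (k - (m + 1)) : ℝ)
      = (4 : ℝ) ^ k := by
  have h := cos_pow_expand k 0
  simp only [mul_zero, Real.cos_zero, mul_one] at h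
  rw [← h, pow_mul]
  norm_num

/-- Weight: 1 for `m = 0`, 2 for `m ≥ 1`. -/
noncomputable def jaW (m : ℕ) : ℝ := if m = 0 then 1 else 2

/-- Double-series term: index `p = (k, m)`. -/
noncomputable def jaF (τ θ : ℝ) (p : ℕ × ℕ) : ℝ :=
  if p.2 ≤ p.1 then
    jaW p.2 * ((-1 : ℝ) ^ p.1 * (τ / 2) ^ (2 * p.1) / (Nat.factorial (2 * p.1))) *
      (Nat.choose (2 * p.1) (p.1 - p.2)) * Real.cos (2 * p.2 * θ)
  else 0

lemma jaF_eq_zero (τ θ : ℝ) {k m : ℕ} (h : k < m) : jaF τ θ (k, m) = 0 := by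
  simp [jaF, Nat.not_le.mpr h]

lemma jaF_row (τ θ : ℝ) (k : ℕ) :
    ∑' m : ℕ, jaF τ θ (k, m)
      = (-1 : ℝ) ^ k * (τ * Real.cos θ) ^ (2 * k) / (Nat.factorial (2 * k)) := by
  have h0 : ∀ m ∉ Finset.range (k + 1), jaF τ θ (k, m) = 0 := by
    intro m hm
    exact jaF_eq_zero τ θ (by simpa [Nat.lt_succ_iff, Nat.not_le] using
      (Finset.mem_range.not.mp hm))
  rw [tsum_eq_sum h0, Finset.sum_range_succ' (fun m => jaF τ θ (k, m)) k]
  have hf0 : jaF τ θ (k, 0) =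
      ((-1 : ℝ) ^ k * (τ / 2) ^ (2 * k) / (Nat.factorial (2 * k))) * (Nat.choose (2 * k) k : ℝ) := by
    simp [jaF, jaW]
  have hstep : ∀ m ∈ Finset.range k, jaF τ θ (k, m + 1) =
      ((-1 : ℝ) ^ k * (τ / 2) ^ (2 * k) / (Nat.factorial (2 * k))) *
        (2 * (Nat.choose (2 * k) (k - (m + 1)) : ℝ) * Real.cos (2 * (m + 1) * θ)) := by
    intro m hm
    have h1 : m + 1 ≤ k := Finset.mem_range.mp hm
    simp only [jaF, if_pos h1, jaW, Nat.succ_ne_zero, if_neg]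
    push_cast
    ring
  rw [Finset.sum_congr rfl hstep, hf0, ← Finset.mul_sum, ← mul_add,
    add_comm (∑ m ∈ Finset.range k, 2 * (Nat.choose (2 * k) (k - (m + 1)) : ℝ)
      * Real.cos (2 * (m + 1) * θ)) _]
  have hexp := cos_pow_expand k θ
  have hx : τ / 2 * (2 * Real.cos θ) = τ * Real.cos θ := by ring
  have hbase : (τ / 2) ^ (2 * k) * (2 * Real.cos θ) ^ (2 * k) = (τ * Real.cos θ) ^ (2 * k) := by
    rw [← mul_pow, hx]
  rw [← hexp, ← hbase]
  ring

lemma jaW_nonneg (m : ℕ) : (0 : ℝ) ≤ jaW m := by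
  unfold jaW; split <;> norm_num

lemma jaW_sum (k : ℕ) :
    ∑ m ∈ Finset.range (k + 1), jaW m * (Nat.choose (2 * k) (k - m) : ℝ) = 4 ^ k := by
  rw [Finset.sum_range_succ' (fun m => jaW m * (Nat.choose (2 * k) (k - m) : ℝ)) k]
  have h1 : ∀ m ∈ Finset.range k, jaW (m + 1) * (Nat.choose (2 * k) (k - (m + 1)) : ℝ)
      = 2 * (Nat.choose (2 * k) (k - (m + 1)) : ℝ) := by
    intro m hm; simp [jaW]
  have h2 : jaW 0 * (Nat.choose (2 * k) (k - 0) : ℝ) = (Nat.choose (2 * k) k : ℝ) := by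
    simp [jaW]
  rw [Finset.sum_congr rfl h1, h2, add_comm]
  exact weight_sum k

lemma jaF_abs_le (τ θ : ℝ) (k m : ℕ) :
    |jaF τ θ (k, m)| ≤ ((τ / 2) ^ (2 * k) / (Nat.factorial (2 * k))) *
      (jaW m * (Nat.choose (2 * k) (k - m) : ℝ)) := by
  have hpow : (0 : ℝ) ≤ (τ / 2) ^ (2 * k) := by
    rw [pow_mul]; exact pow_nonneg (sq_nonneg _) k
  have hD : (0 : ℝ) ≤ (τ / 2) ^ (2 * k) / (Nat.factorial (2 * k)) := by positivity
  by_cases h : m ≤ k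
  · unfold jaF
    rw [if_pos h]
    simp only []
    rw [abs_mul, abs_mul, abs_mul]
    have e1 : |jaW m| = jaW m := abs_of_nonneg (jaW_nonneg m)
    have e2 : |(-1 : ℝ) ^ k * (τ / 2) ^ (2 * k) / (Nat.factorial (2 * k))|
        = (τ / 2) ^ (2 * k) / (Nat.factorial (2 * k)) := by
      rw [abs_div, abs_mul, abs_pow, abs_neg, abs_one, one_pow, one_mul,
        abs_of_nonneg hpow, Nat.abs_cast]
    have e3 : |(Nat.choose (2 * k) (k - m) : ℝ)| = (Nat.choose (2 * k) (k - m) : ℝ) :=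
      Nat.abs_cast _
    rw [e1, e2, e3]
    have hcos : |Real.cos (2 * m * θ)| ≤ 1 := Real.abs_cos_le_one _
    have hnn : (0 : ℝ) ≤ jaW m * ((τ / 2) ^ (2 * k) / (Nat.factorial (2 * k))) *
        (Nat.choose (2 * k) (k - m) : ℝ) := by
      have := jaW_nonneg m; positivity
    calc jaW m * ((τ / 2) ^ (2 * k) / (Nat.factorial (2 * k))) *
          (Nat.choose (2 * k) (k - m) : ℝ) * |Real.cos (2 * m * θ)|
        ≤ jaW m * ((τ / 2) ^ (2 * k) / (Nat.factorial (2 * k))) *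
          (Nat.choose (2 * k) (k - m) : ℝ) * 1 := by
          exact mul_le_mul_of_nonneg_left hcos hnn
      _ = ((τ / 2) ^ (2 * k) / (Nat.factorial (2 * k))) *
          (jaW m * (Nat.choose (2 * k) (k - m) : ℝ)) := by ring
  · rw [jaF_eq_zero τ θ (Nat.not_le.mp h), abs_zero]
    have := jaW_nonneg m
    positivity

lemma jaF_summable_abs (τ θ : ℝ) : Summable (fun p : ℕ × ℕ => |jaF τ θ p|) := by
  apply (summable_prod_of_nonneg (fun p => abs_nonneg _)).mpr
  refine ⟨fun k => ?_, ?_⟩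
  · apply summable_of_ne_finset_zero (s := Finset.range (k + 1))
    intro m hm
    rw [jaF_eq_zero τ θ (by simpa [Nat.lt_succ_iff, Nat.not_le] using Finset.mem_range.not.mp hm),
      abs_zero]
  · apply Summable.of_nonneg_of_le (fun k => tsum_nonneg fun m => abs_nonneg _)
      ?_ (Real.summable_pow_div_factorial (τ ^ 2))
    intro k
    have h0 : ∀ m ∉ Finset.range (k + 1), |jaF τ θ (k, m)| = 0 := by
      intro m hm
      rw [jaF_eq_zero τ θ (by simpa [Nat.lt_succ_iff, Nat.not_le] using Finset.mem_range.not.mp hm),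
        abs_zero]
    rw [tsum_eq_sum h0]
    have hle : ∑ m ∈ Finset.range (k + 1), |jaF τ θ (k, m)|
        ≤ ∑ m ∈ Finset.range (k + 1), ((τ / 2) ^ (2 * k) / (Nat.factorial (2 * k))) *
          (jaW m * (Nat.choose (2 * k) (k - m) : ℝ)) :=
      Finset.sum_le_sum fun m _ => jaF_abs_le τ θ k m
    rw [← Finset.mul_sum, jaW_sum k] at hle
    refine hle.trans ?_
    have hval : (τ / 2) ^ (2 * k) / (Nat.factorial (2 * k)) * 4 ^ k
        = (τ ^ 2) ^ k / (Nat.factorial (2 * k)) := by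
      rw [div_mul_eq_mul_div, pow_mul, ← mul_pow]
      congr 2
      ring
    rw [hval]
    apply div_le_div_of_nonneg_left ?_ ?_ ?_
    · exact pow_nonneg (sq_nonneg τ) k
    · exact_mod_cast Nat.factorial_pos k
    · exact_mod_cast Nat.factorial_le (by omega : k ≤ 2 * k)

lemma jaF_summable (τ θ : ℝ) : Summable (jaF τ θ) :=
  summable_abs_iff.mp (jaF_summable_abs τ θ)

lemma jaF_col (τ θ : ℝ) (m : ℕ) :
    ∑' k : ℕ, jaF τ θ (k, m)
      = jaW m * ((-1 : ℝ) ^ m * besselJ (2 * m) τ * Real.cos (2 * m * θ)) := by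
  have hshift : ∑' k : ℕ, jaF τ θ (k, m) = ∑' j : ℕ, jaF τ θ (m + j, m) := by
    symm
    have hsupp : Function.support (fun k => jaF τ θ (k, m))
        ⊆ Set.range (fun j : ℕ => m + j) := by
      intro k hk
      by_cases hkm : m ≤ k
      · exact ⟨k - m, by simp; omega⟩
      · exact absurd (jaF_eq_zero τ θ (Nat.not_le.mp hkm)) hk
    exact (add_right_injective m).tsum_eq hsupp
  have hterm : ∀ j : ℕ, jaF τ θ (m + j, m)
      = (jaW m * ((-1 : ℝ) ^ m * Real.cos (2 * m * θ))) *
        ((-1 : ℝ) ^ j / (Nat.factorial j * Nat.factorial (2 * m + j)) * (τ / 2) ^ (2 * j + 2 * m)) := by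
    intro j
    unfold jaF
    rw [if_pos (Nat.le_add_right m j)]
    simp only []
    have he : m + j - m = j := by omega
    rw [he]
    have hC : ((2 * (m + j)).choose j : ℝ)
        = ((2 * (m + j)).factorial : ℝ) / ((j.factorial : ℝ) * ((2 * m + j).factorial : ℝ)) := by
      rw [eq_div_iff (by positivity)]
      have h := Nat.choose_mul_factorial_mul_factorial (show j ≤ 2 * (m + j) by omega)
      have hnj : 2 * (m + j) - j = 2 * m + j := by omega
      rw [hnj] at h
      have h2 := congrArg (Nat.cast (R := ℝ)) h
      push_cast at h2
      linarith [h2]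
    rw [hC]
    have hf1 : ((j.factorial : ℝ)) ≠ 0 := by exact_mod_cast j.factorial_ne_zero
    have hf2 : (((2 * m + j).factorial : ℝ)) ≠ 0 := by exact_mod_cast (2 * m + j).factorial_ne_zero
    have hf3 : (((2 * (m + j)).factorial : ℝ)) ≠ 0 := by
      exact_mod_cast (2 * (m + j)).factorial_ne_zero
    field_simp
    ring
  rw [hshift, tsum_congr hterm, tsum_mul_left]
  rw [besselJ]
  ring

/-- Jacobi–Anger expansion for the cosine: the sum over `n : ℕ` corresponds to the
sum over `m = n + 1 ≥ 1` in the usual formulation. -/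
theorem jacobi_anger_cos (τ θ : ℝ) :
    Real.cos (τ * Real.cos θ) =
      besselJ 0 τ +
        2 * ∑' n : ℕ, (-1 : ℝ) ^ (n + 1) * besselJ (2 * (n + 1)) τ *
          Real.cos (2 * (n + 1) * θ) := by
  have hsum := jaF_summable τ θ
  set S := ∑' p : ℕ × ℕ, jaF τ θ p with hS
  have hrows : HasSum (fun k => ∑' m, jaF τ θ (k, m)) S :=
    hsum.hasSum.prod_fiberwise fun k => (hsum.prod_factor k).hasSum
  have hswap : Summable (fun p : ℕ × ℕ => jaF τ θ (p.2, p.1)) := hsum.prod_symm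
  have hS' : HasSum (fun m => ∑' k, jaF τ θ (k, m)) (∑' p : ℕ × ℕ, jaF τ θ (p.2, p.1)) :=
    hswap.hasSum.prod_fiberwise fun m => (hswap.prod_factor m).hasSum
  have hSS : (∑' p : ℕ × ℕ, jaF τ θ (p.2, p.1)) = S := by
    rw [hS]
    exact (Equiv.prodComm ℕ ℕ).tsum_eq (jaF τ θ)
  have hcols : HasSum (fun m => ∑' k, jaF τ θ (k, m)) S := hSS ▸ hS'
  have hL : Real.cos (τ * Real.cos θ) = S := by
    rw [Real.cos_eq_tsum, ← hrows.tsum_eq]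
    exact tsum_congr fun k => (jaF_row τ θ k).symm
  simp only [jaF_col τ θ] at hcols
  have hGs := hcols.summable
  rw [hL, ← hcols.tsum_eq, hGs.tsum_eq_zero_add]
  congr 1
  · norm_num [jaW]
  · rw [← tsum_mul_left]
    apply tsum_congr
    intro n
    have hw : jaW (n + 1) = 2 := by simp [jaW]
    rw [hw]
    push_cast
    ring
end

section
/- The Jacobi–Anger expansion: for all real τ and θ, sin(τ cos θ) = -2 Σ_{m=1}^∞ (-1)^m J_{2m-1}(τ) cos((2m-1)θ). -/
lemma cospow (j : ℕ) (θ : ℝ) :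
    (2 * Real.cos θ) ^ (2*j+1) =
      ∑ k ∈ Finset.range (j+1),
        (Nat.choose (2*j+1) k : ℝ) * (2 * Real.cos ((2*(j-k)+1 : ℕ) * θ)) := by
  have key : (2 * Complex.cos θ) ^ (2*j+1) =
      ∑ k ∈ Finset.range (j+1),
        (Nat.choose (2*j+1) k : ℂ) * (2 * Complex.cos ((2*(j-k)+1 : ℕ) * θ)) := by
    set x : ℂ := Complex.exp (θ * Complex.I) with hx
    set y : ℂ := Complex.exp (-(θ * Complex.I)) with hy
    have hxy : x * y = 1 := by rw [hx, hy, ← Complex.exp_add]; simp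
    have h2c : 2 * Complex.cos θ = x + y := by
      rw [Complex.cos, hx, hy]; ring_nf
    have hxpow : ∀ m : ℕ, x ^ m + y ^ m = 2 * Complex.cos ((m : ℝ) * θ) := by
      intro m
      rw [hx, hy, ← Complex.exp_nat_mul, ← Complex.exp_nat_mul, Complex.cos]
      push_cast
      ring_nf
    rw [h2c, add_pow]
    have hsplit : 2*j+1+1 = (j+1) + (j+1) := by omega
    rw [hsplit, Finset.sum_range_add]
    -- first half: k ≤ j, term x^k y^(2j+1-k) C = C * y^(2(j-k)+1)
    have h1 : ∀ k ∈ Finset.range (j+1),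
        x ^ k * y ^ (2*j+1-k) * (Nat.choose (2*j+1) k : ℂ)
          = (Nat.choose (2*j+1) k : ℂ) * y ^ (2*(j-k)+1) := by
      intro k hk
      rw [Finset.mem_range] at hk
      have : 2*j+1-k = (2*(j-k)+1) + k := by omega
      rw [this, pow_add]
      have : x ^ k * y ^ k = 1 := by rw [← mul_pow, hxy, one_pow]
      calc x ^ k * (y ^ (2*(j-k)+1) * y ^ k) * (Nat.choose (2*j+1) k : ℂ)
          = (x ^ k * y ^ k) * y ^ (2*(j-k)+1) * (Nat.choose (2*j+1) k : ℂ) := by ring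
        _ = (Nat.choose (2*j+1) k : ℂ) * y ^ (2*(j-k)+1) := by rw [this]; ring
    -- second half
    have h2 : ∀ i ∈ Finset.range (j+1),
        x ^ (j+1+i) * y ^ (2*j+1-(j+1+i)) * (Nat.choose (2*j+1) (j+1+i) : ℂ)
          = (Nat.choose (2*j+1) (j+1+i) : ℂ) * x ^ (2*i+1) := by
      intro i hi
      rw [Finset.mem_range] at hi
      have e1 : 2*j+1-(j+1+i) = j - i := by omega
      have e2 : x ^ (j+1+i) = x ^ (2*i+1) * x ^ (j-i) := by
        rw [← pow_add]; congr 1; omega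
      rw [e1, e2]
      have : x ^ (j-i) * y ^ (j-i) = 1 := by rw [← mul_pow, hxy, one_pow]
      calc x ^ (2*i+1) * x ^ (j-i) * y ^ (j-i) * (Nat.choose (2*j+1) (j+1+i) : ℂ)
          = (x ^ (j-i) * y ^ (j-i)) * x ^ (2*i+1) * (Nat.choose (2*j+1) (j+1+i) : ℂ) := by ring
        _ = (Nat.choose (2*j+1) (j+1+i) : ℂ) * x ^ (2*i+1) := by rw [this]; ring
    rw [Finset.sum_congr rfl h1, Finset.sum_congr rfl h2]
    -- reflect second sum
    have hrefl : ∑ i ∈ Finset.range (j+1), (Nat.choose (2*j+1) (j+1+i) : ℂ) * x ^ (2*i+1)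
        = ∑ k ∈ Finset.range (j+1), (Nat.choose (2*j+1) k : ℂ) * x ^ (2*(j-k)+1) := by
      rw [← Finset.sum_range_reflect]
      apply Finset.sum_congr rfl
      intro k hk
      rw [Finset.mem_range] at hk
      have e1 : j + 1 + (j + 1 - 1 - k) = 2*j+1-k := by omega
      rw [e1]
      congr 2
      exact Nat.choose_symm (by omega)
    rw [hrefl, ← Finset.sum_add_distrib]
    apply Finset.sum_congr rfl
    intro k hk
    rw [← mul_add, add_comm (y ^ (2*(j-k)+1)), hxpow (2*(j-k)+1)]
    norm_cast
  exact_mod_cast key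

noncomputable def F (τ θ : ℝ) (p : ℕ × ℕ) : ℝ :=
  (-2:ℝ) * ((-1:ℝ)^(p.1+1) * ((-1:ℝ)^p.2 / (Nat.factorial p.2 * Nat.factorial (2*p.1+1+p.2)) *
    (τ/2)^(2*p.2+(2*p.1+1))) * Real.cos ((2*p.1+1)*θ))

lemma summableF (τ θ : ℝ) : Summable (F τ θ) := by
  set r : ℝ := (|τ|/2)^2 with hr
  have hr0 : 0 ≤ r := sq_nonneg _
  have hf : Summable (fun n : ℕ => 2*(|τ|/2) * r^n/(Nat.factorial n)) := by
    simpa [mul_div_assoc] using (Real.summable_pow_div_factorial r).mul_left (2*(|τ|/2))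
  have hg : Summable (fun k : ℕ => r^k/(Nat.factorial k)) := Real.summable_pow_div_factorial r
  have hb := hf.mul_of_nonneg hg (fun n => by positivity) (fun k => by positivity)
  apply Summable.of_norm_bounded hb
  intro ⟨n, k⟩
  show ‖F τ θ (n,k)‖ ≤ 2*(|τ|/2) * r^n/(Nat.factorial n) * (r^k/(Nat.factorial k))
  have habs : |(τ/2 : ℝ)| = |τ|/2 := by rw [abs_div]; norm_num
  have hFval : F τ θ (n,k) = ((-2:ℝ) * ((-1:ℝ)^(n+1) * ((-1:ℝ)^k /
      (Nat.factorial k * Nat.factorial (2*n+1+k)) * (τ/2)^(2*k+(2*n+1))))) *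
      Real.cos ((2*n+1)*θ) := by
    rw [F]; ring_nf
  have h2 : |((-2:ℝ) * ((-1:ℝ)^(n+1) * ((-1:ℝ)^k /
      (Nat.factorial k * Nat.factorial (2*n+1+k)) * (τ/2)^(2*k+(2*n+1)))))| =
      2 * (|τ|/2)^(2*k+(2*n+1)) / (Nat.factorial k * Nat.factorial (2*n+1+k)) := by
    simp only [abs_mul, abs_div, abs_pow, abs_neg, abs_one, one_pow, habs, Nat.abs_cast,
      one_mul, one_div]
    rw [abs_two]
    ring
  have h1 : ‖F τ θ (n, k)‖ ≤
      2 * (|τ|/2)^(2*k+(2*n+1)) / (Nat.factorial k * Nat.factorial (2*n+1+k)) := by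
    rw [Real.norm_eq_abs, hFval, abs_mul, h2]
    calc (2 * (|τ|/2)^(2*k+(2*n+1)) / (Nat.factorial k * Nat.factorial (2*n+1+k))) *
          |Real.cos ((2*n+1)*θ)|
        ≤ (2 * (|τ|/2)^(2*k+(2*n+1)) / (Nat.factorial k * Nat.factorial (2*n+1+k))) * 1 := by
          gcongr
          exact Real.abs_cos_le_one _
      _ = _ := mul_one _
  refine h1.trans ?_
  have hpow : (|τ|/2)^(2*k+(2*n+1)) = (|τ|/2) * r^n * r^k := by
    rw [hr, ← pow_mul, ← pow_mul]
    rw [show (|τ|/2) * (|τ|/2)^(2*n) * (|τ|/2)^(2*k) = (|τ|/2)^(2*n+2*k+1) by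
      rw [pow_add, pow_add, pow_one]; ring]
    congr 1
    omega
  have hfacle : ((Nat.factorial k : ℝ)) * (Nat.factorial n) ≤
      (Nat.factorial k) * (Nat.factorial (2*n+1+k)) := by
    have : (Nat.factorial n : ℕ) ≤ Nat.factorial (2*n+1+k) := Nat.factorial_le (by omega)
    exact_mod_cast Nat.mul_le_mul_left _ this
  calc 2 * (|τ|/2)^(2*k+(2*n+1)) / ((Nat.factorial k : ℝ) * Nat.factorial (2*n+1+k))
      ≤ 2 * (|τ|/2)^(2*k+(2*n+1)) / ((Nat.factorial k : ℝ) * Nat.factorial n) := by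
        gcongr
    _ = 2*(|τ|/2) * r^n/(Nat.factorial n) * (r^k/(Nat.factorial k)) := by
        rw [hpow]; ring

noncomputable def G (τ θ : ℝ) (q : ℕ × ℕ) : ℝ :=
  if q.2 ≤ q.1 then
    (-2:ℝ) * ((-1:ℝ)^(q.1+1) * (τ/2)^(2*q.1+1) *
      (1/(Nat.factorial q.2 * Nat.factorial (2*q.1+1-q.2))) *
      Real.cos ((2*(q.1-q.2)+1 : ℕ)*θ))
  else 0

lemma keyGF (τ θ : ℝ) (p : ℕ × ℕ) : G τ θ (p.1 + p.2, p.2) = F τ θ p := by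
  obtain ⟨n, k⟩ := p
  have hle : k ≤ n + k := Nat.le_add_left k n
  simp only [G, F, if_pos hle]
  have e1 : n + k - k = n := by omega
  have e2 : 2*(n+k)+1-k = 2*n+1+k := by omega
  have e3 : 2*(n+k)+1 = 2*k+(2*n+1) := by omega
  rw [e1, e2, e3]
  have e4 : ((-1:ℝ))^(n+k+1) = (-1:ℝ)^(n+1) * (-1:ℝ)^k := by
    rw [show n+k+1 = (n+1)+k by omega, pow_add]
  rw [e4]
  push_cast
  ring

lemma innersumG (τ θ : ℝ) (j : ℕ) :
    ∑' k : ℕ, G τ θ (j, k) =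
      (-1:ℝ)^j * (τ * Real.cos θ)^(2*j+1) / (Nat.factorial (2*j+1)) := by
  rw [tsum_eq_sum (s := Finset.range (j+1)) (by
    intro k hk
    rw [Finset.mem_range] at hk
    exact if_neg (by omega))]
  have hterm : ∀ k ∈ Finset.range (j+1), G τ θ (j, k) =
      (-((-1:ℝ)^(j+1)) * (τ/2)^(2*j+1)/(Nat.factorial (2*j+1))) *
        ((Nat.choose (2*j+1) k : ℝ) * (2 * Real.cos ((2*(j-k)+1 : ℕ)*θ))) := by
    intro k hk
    rw [Finset.mem_range] at hk
    have hkj : k ≤ j := by omega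
    simp only [G, if_pos hkj]
    have hck : ((2*j+1).choose k * (Nat.factorial k * Nat.factorial (2*j+1-k)) : ℕ)
        = Nat.factorial (2*j+1) := by
      rw [← mul_assoc]
      exact Nat.choose_mul_factorial_mul_factorial (by omega)
    have hC : (1:ℝ)/((Nat.factorial k : ℝ) * (Nat.factorial (2*j+1-k))) =
        ((2*j+1).choose k : ℝ)/(Nat.factorial (2*j+1)) := by
      rw [div_eq_div_iff (by positivity) (by positivity), one_mul]
      exact_mod_cast hck.symm
    rw [hC]
    ring
  rw [Finset.sum_congr rfl hterm, ← Finset.mul_sum, ← cospow]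
  have hmp : (τ/2)^(2*j+1) * (2*Real.cos θ)^(2*j+1) = (τ*Real.cos θ)^(2*j+1) := by
    rw [← mul_pow]
    congr 1
    ring
  rw [← hmp]
  have : -((-1:ℝ)^(j+1)) = (-1:ℝ)^j := by
    rw [pow_succ]
    ring
  rw [this]
  ring

/-- Jacobi–Anger expansion for the sine: the sum over `n : ℕ` corresponds to the
sum over `m = n + 1 ≥ 1` (so `2m - 1 = 2n + 1`) in the usual formulation. -/
theorem jacobi_anger_sin (τ θ : ℝ) :
    Real.sin (τ * Real.cos θ) =
      -2 * ∑' n : ℕ, (-1 : ℝ) ^ (n + 1) * besselJ (2 * n + 1) τ *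
        Real.cos ((2 * n + 1) * θ) := by
  have hF := summableF τ θ
  set ι : ℕ × ℕ → ℕ × ℕ := fun p => (p.1 + p.2, p.2) with hιdef
  have hinj : Function.Injective ι := by
    intro p q h
    simp only [ι, Prod.mk.injEq] at h
    obtain ⟨h1, h2⟩ := h
    exact Prod.ext (by omega) h2
  have hGι : ∀ p, G τ θ (ι p) = F τ θ p := fun p => keyGF τ θ p
  have hsupp : Function.support (G τ θ) ⊆ Set.range ι := by
    intro q hq
    by_cases h : q.2 ≤ q.1
    · refine ⟨(q.1 - q.2, q.2), ?_⟩
      simp only [ι]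
      exact Prod.ext (by omega) rfl
    · exact absurd (if_neg h) hq
  have hzero : ∀ q ∉ Set.range ι, G τ θ q = 0 := by
    intro q hq
    by_contra h
    exact hq (hsupp h)
  have hG : Summable (G τ θ) := by
    rw [← hinj.summable_iff hzero]
    exact Summable.congr hF (fun p => (hGι p).symm)
  have hstep1 : ∑' p : ℕ × ℕ, F τ θ p = ∑' q : ℕ × ℕ, G τ θ q := by
    calc ∑' p : ℕ × ℕ, F τ θ p = ∑' p : ℕ × ℕ, G τ θ (ι p) :=
          tsum_congr (fun p => (hGι p).symm)
      _ = ∑' q : ℕ × ℕ, G τ θ q := hinj.tsum_eq hsupp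
  have hbessel : ∀ n : ℕ, ∑' k : ℕ, F τ θ (n, k) =
      -2 * ((-1:ℝ)^(n+1) * besselJ (2*n+1) τ * Real.cos ((2*n+1)*θ)) := by
    intro n
    have h1 : ∀ k : ℕ, F τ θ (n,k) = ((-2:ℝ) * ((-1:ℝ)^(n+1)) * Real.cos ((2*n+1)*θ)) *
        ((-1:ℝ)^k/(Nat.factorial k * Nat.factorial (2*n+1+k)) * (τ/2)^(2*k+(2*n+1))) := by
      intro k
      rw [F]
      push_cast
      ring
    rw [tsum_congr h1, tsum_mul_left, besselJ]
    ring
  calc Real.sin (τ * Real.cos θ)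
      = ∑' j : ℕ, (-1:ℝ)^j * (τ*Real.cos θ)^(2*j+1) / (Nat.factorial (2*j+1)) :=
        Real.sin_eq_tsum _
    _ = ∑' j : ℕ, ∑' k : ℕ, G τ θ (j,k) := tsum_congr fun j => (innersumG τ θ j).symm
    _ = ∑' q : ℕ × ℕ, G τ θ q := (Summable.tsum_prod' hG (fun j => hG.prod_factor j)).symm
    _ = ∑' p : ℕ × ℕ, F τ θ p := hstep1.symm
    _ = ∑' n : ℕ, ∑' k : ℕ, F τ θ (n,k) := Summable.tsum_prod' hF (fun n => hF.prod_factor n)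
    _ = ∑' n : ℕ, -2 * ((-1:ℝ)^(n+1) * besselJ (2*n+1) τ * Real.cos ((2*n+1)*θ)) :=
        tsum_congr hbessel
    _ = -2 * ∑' n : ℕ, (-1:ℝ)^(n+1) * besselJ (2*n+1) τ * Real.cos ((2*n+1)*θ) :=
        tsum_mul_left
end
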